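/- Let I be a real symmetric positive definite n×n matrix, Σ a real symmetric positive definite k×k matrix, and G a real k×n matrix. If I ⪰ Gᵀ Σ⁻¹ G (i.e., I − Gᵀ Σ⁻¹ G is positive semidefinite), then G I⁻¹ Gᵀ ⪯ Σ, i.e., Σ − G I⁻¹ Gᵀ is positive semidefinite. -/

import Mathlib

open Matrix

/-- Let `I` be a real symmetric positive definite `n×n` matrix, `Σ` a real symmetric
positive definite `k×k` matrix, and `G` a real `k×n` matrix. If `I ⪰ Gᵀ Σ⁻¹ G`,
then `G I⁻¹ Gᵀ ⪯ Σ`, i.e. `Σ - G I⁻¹ Gᵀ` is positive semidefinite. -/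
theorem propagated_cov_le_target_of_fim_ge {n k : ℕ}
    (I : Matrix (Fin n) (Fin n) ℝ) (hI : I.PosDef)
    (S : Matrix (Fin k) (Fin k) ℝ) (hS : S.PosDef)
    (G : Matrix (Fin k) (Fin n) ℝ)
    (hIJ : (I - Gᵀ * S⁻¹ * G).PosSemidef) :
    (S - G * I⁻¹ * Gᵀ).PosSemidef := by
  have hGH : Gᴴ = Gᵀ := by
    rfl
  haveI := hI.isUnit.invertible
  haveI := hS.isUnit.invertible
  have h1 : (fromBlocks S G Gᴴ I).PosSemidef := by
    rw [PosDef.fromBlocks₁₁ G I hS, hGH]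
    exact hIJ
  rw [PosDef.fromBlocks₂₂ S G hI, hGH] at h1
  exact h1
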